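/- Let S be a Noetherian domain, I an ideal of S, and suppose there exists an element g in the fraction field of S with g ∉ S but g·I ⊆ S and I ≠ 0. Then Ext¹_S(S/I, S) ≠ 0. -/

import Mathlib

open CategoryTheory

noncomputable section

open Limits in
/-- Let `S` be a Noetherian domain with fraction field `K`, `I` a nonzero ideal, and `g ∈ K`
with `g ∉ S` but `g·I ⊆ S`. Then `Ext¹_S(S/I, S) ≠ 0`. -/
theorem ext_one_ne_zero_of_fractional_element (S : Type) [CommRing S] [IsDomain S]
    [IsNoetherianRing S] (K : Type) [Field K] [Algebra S K] [IsFractionRing S K]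
    (I : Ideal S) (hI : I ≠ ⊥) (g : K) (hg : g ∉ Set.range (algebraMap S K))
    (hgI : ∀ i ∈ I, g * algebraMap S K i ∈ Set.range (algebraMap S K)) :
    Nontrivial (((Ext S (ModuleCat S) 1).obj
      (Opposite.op (ModuleCat.of S (S ⧸ I)))).obj (ModuleCat.of S S)) := by
  set Y : ModuleCat S := ModuleCat.of S S with hY
  set P := ProjectiveResolution.of (ModuleCat.of S (S ⧸ I)) with hP
  have e := (P.isoExt (R := S) 1 Y).toLinearEquiv
  set CC := P.complex.linearYonedaObj S Y with hCC
  have inj : Function.Injective (algebraMap S K) := IsFractionRing.injective S K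
  let q : Y ⟶ ModuleCat.of S (S ⧸ I) := ModuleCat.ofHom I.mkQ
  haveI : Epi q := (ModuleCat.epi_iff_surjective _).2 (Submodule.mkQ_surjective I)
  let α : P.complex.X 0 ⟶ Y := @Projective.factorThru _ _ _ _ _ _ (P.π.f 0) q this
  have hα : α ≫ q = P.π.f 0 := Projective.factorThru_comp _ _
  let d1 : P.complex.X 1 ⟶ P.complex.X 0 := P.complex.d 1 0
  have hd1π : d1 ≫ P.π.f 0 = 0 := P.complex_d_comp_π_f_zero
  have hmem : ∀ x : P.complex.X 1, α (d1 x) ∈ I := by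
    intro x
    have h0 : q (α (d1 x)) = 0 := by
      have h1 : d1 ≫ α ≫ q = 0 := by rw [hα]; exact hd1π
      exact ConcreteCategory.congr_hom h1 x
    rwa [show q (α (d1 x)) = Submodule.Quotient.mk (α (d1 x)) from rfl,
      Submodule.Quotient.mk_eq_zero] at h0
  let φf : P.complex.X 1 → S := fun x => (hgI _ (hmem x)).choose
  have hφf : ∀ x, algebraMap S K (φf x) = g * algebraMap S K (α (d1 x)) :=
    fun x => (hgI _ (hmem x)).choose_spec
  let φ : P.complex.X 1 ⟶ Y := ModuleCat.ofHom
    { toFun := φf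
      map_add' := by
        intro x y
        apply inj
        simp only [hφf, map_add, mul_add]
      map_smul' := by
        intro s x
        apply inj
        simp only [hφf, map_smul, RingHom.id_apply]
        simp only [smul_eq_mul, map_mul]
        rw [hφf x]
        ring }
  have key : Nontrivial (CC.homology 1) := by
    by_contra h
    rw [not_nontrivial_iff_subsingleton] at h
    have hz : IsZero (CC.homology 1) := ModuleCat.isZero_of_subsingleton _
    have hex0 : CC.ExactAt 1 := by
      rw [HomologicalComplex.exactAt_iff_isZero_homology]; exact hz
    have hex : (CC.sc' 0 1 2).Exact := (CC.exactAt_iff' 0 1 2 (by simp) (by simp)).1 hex0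
    rw [ShortComplex.moduleCat_exact_iff] at hex
    have hcocycle : (CC.sc' 0 1 2).g φ = 0 := by
      show (CC.d 1 2) φ = 0
      have h2 : P.complex.d 2 1 ≫ φ = 0 := by
        ext x
        apply inj
        have h3 : d1 ((P.complex.d 2 1) x) = 0 :=
          ConcreteCategory.congr_hom (P.complex.d_comp_d 2 1 0) x
        show algebraMap S K (φ ((P.complex.d 2 1) x)) = algebraMap S K 0
        simp [show φ ((P.complex.d 2 1) x) = φf ((P.complex.d 2 1) x) from rfl, hφf, h3]
      exact h2
    obtain ⟨ψ, hψ⟩ := hex φ hcocycle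
    let ψ' : P.complex.X 0 ⟶ Y := ψ
    have hψ' : ∀ x : P.complex.X 1, ψ' (d1 x) = φf x := by
      intro x
      have h4 : (P.complex.d 1 0 ≫ ψ') = φ := by
        have : (CC.sc' 0 1 2).f ψ = φ := hψ
        rw [show (CC.sc' 0 1 2).f ψ = P.complex.d 1 0 ≫ ψ' from rfl] at this
        exact this
      exact ConcreteCategory.congr_hom h4 x
    -- derive the contradiction
    obtain ⟨i, hiI, hi0⟩ := Submodule.ne_bot_iff I |>.1 hI
    have hπsurj : Function.Surjective (P.π.f 0) :=
      (ModuleCat.epi_iff_surjective _).1 inferInstance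
    obtain ⟨p, hp⟩ := hπsurj (Submodule.Quotient.mk 1)
    have hip : (P.π.f 0) (i • p) = 0 := by
      rw [map_smul, hp]
      show (Submodule.Quotient.mk (i • (1:S)) : S ⧸ I) = 0
      rw [Submodule.Quotient.mk_eq_zero]
      simpa using hiI
    have hex0' := P.exact₀
    rw [ShortComplex.moduleCat_exact_iff] at hex0'
    obtain ⟨x, hx⟩ := hex0' (i • p) hip
    -- hx : d1 x = i • p
    have h5 : algebraMap S K (ψ' (i • p)) = g * algebraMap S K (α (i • p)) := by
      rw [← hx, hψ' x, hφf x, hx]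
    have ea : α (i • p) = i • α p := map_smul α.hom i p
    have eb : ψ' (i • p) = i • ψ' p := map_smul ψ'.hom i p
    rw [ea, eb] at h5
    simp only [smul_eq_mul, map_mul] at h5
    have hine : algebraMap S K i ≠ 0 := fun hc => hi0 (inj (by simpa using hc))
    have h7 : algebraMap S K (ψ' p) = g * algebraMap S K (α p) :=
      mul_left_cancel₀ hine (h5.trans (by ring))
    have hj : (show S from α p) - 1 ∈ I := by
      rw [← Submodule.Quotient.eq I]
      have : q (α p) = (P.π.f 0) p := ConcreteCategory.congr_hom hα p
      rw [hp] at this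
      exact this
    obtain ⟨t, ht⟩ := hgI _ hj
    apply hg
    refine ⟨(show S from ψ' p) - t, ?_⟩
    rw [map_sub, ht, map_sub, map_one]
    rw [show (algebraMap S K) (show S from ψ' p) = g * algebraMap S K (α p) from h7]
    ring
  exact e.toEquiv.nontrivial
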